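/- If f : ℝⁿ × V → ℝ is a learnable vertex filter, differentiable in the parameter vector θ for each vertex of a finite complex K, the values f(θ₀, v) are pairwise distinct across vertices at θ₀, and s : ℝ² → ℝ is differentiable, then θ ↦ V(ph_k^f(θ, K)) is differentiable at θ₀, where near θ₀ it equals θ ↦ Σ_{i<j} μ_k^{i,j}(θ₀) · s(f(θ, v_{π(i)}), f(θ, v_{π(j)})) for the sorting permutation π at θ₀ and the (locally constant) barcode multiplicities μ_k^{i,j}(θ₀). -/

import Mathlib

open Finset

/-- A (finite, abstract) simplicial complex over vertex type `V`:
a set of nonempty finite subsets of `V` closed under taking nonempty subsets. -/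
def IsSimplicialComplex {V : Type*} (K : Set (Finset V)) : Prop :=
  ∅ ∉ K ∧ ∀ σ ∈ K, ∀ τ ⊆ σ, τ.Nonempty → τ ∈ K

/-- The simplicial boundary operator over `ZMod 2` on the free module spanned by all
finite subsets of `V`: a simplex of dimension `≥ 1` is sent to the formal sum of its
codimension-one faces, a vertex is sent to `0`. -/
noncomputable def bdry (V : Type*) [Fintype V] [DecidableEq V] :
    (Finset V → ZMod 2) →ₗ[ZMod 2] (Finset V → ZMod 2) :=
  ∑ σ : Finset V, (LinearMap.proj σ).smulRight
      (if 2 ≤ σ.card then ∑ v ∈ σ, Pi.single (σ.erase v) (1 : ZMod 2) else 0)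

open Classical in
/-- The space of `k`-chains over `ZMod 2` of a set `S` of simplices: chains supported on
the `k`-dimensional simplices (cardinality `k+1`) belonging to `S`. -/
noncomputable def chains {V : Type*} [Fintype V] [DecidableEq V]
    (S : Set (Finset V)) (k : ℕ) : Submodule (ZMod 2) (Finset V → ZMod 2) :=
  Submodule.pi Set.univ
    (fun σ => if σ ∈ S ∧ σ.card = k + 1 then (⊤ : Submodule (ZMod 2) (ZMod 2)) else ⊥)

/-- The `k`-cycles of `S`: kernel of the `k`-th boundary operator of `S`. -/
noncomputable def cyclesSub {V : Type*} [Fintype V] [DecidableEq V]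
    (S : Set (Finset V)) (k : ℕ) : Submodule (ZMod 2) (Finset V → ZMod 2) :=
  chains S k ⊓ LinearMap.ker (bdry V)

/-- The `k`-boundaries of `S`: image of the `(k+1)`-st boundary operator of `S`. -/
noncomputable def boundariesSub {V : Type*} [Fintype V] [DecidableEq V]
    (S : Set (Finset V)) (k : ℕ) : Submodule (ZMod 2) (Finset V → ZMod 2) :=
  Submodule.map (bdry V) (chains S (k + 1))

/-- The persistent Betti number `β_k^{i,j}` of a pair of complexes `Ki ⊆ Kj`:
the rank of `H_k^{i,j} = ker ∂_k^i / (im ∂_{k+1}^j ∩ ker ∂_k^i)`. -/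
noncomputable def pBetti {V : Type*} [Fintype V] [DecidableEq V]
    (Ki Kj : Set (Finset V)) (k : ℕ) : ℕ :=
  Module.finrank (ZMod 2)
    (↥(cyclesSub Ki k) ⧸ Submodule.comap (cyclesSub Ki k).subtype (boundariesSub Kj k))


/-- The persistent Betti number `β_k^{i,j}` of a filtration `Kc`, as an integer. -/
noncomputable def pB {V : Type*} [Fintype V] [DecidableEq V]
    (Kc : ℕ → Set (Finset V)) (k i j : ℕ) : ℤ :=
  pBetti (Kc i) (Kc j) k

/-- The multiplicity `μ_k^{i,j} = (β_k^{i,j−1} − β_k^{i,j}) − (β_k^{i−1,j−1} − β_k^{i−1,j})`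
of the barcode point `(a_i, a_j)`. -/
noncomputable def mult {V : Type*} [Fintype V] [DecidableEq V]
    (Kc : ℕ → Set (Finset V)) (k i j : ℕ) : ℤ :=
  (pB Kc k i (j - 1) - pB Kc k i j) - (pB Kc k (i - 1) (j - 1) - pB Kc k (i - 1) j)

/-- The multiplicity `μ_k^{i,∞} = β_k^{i,m} − β_k^{i−1,m}` of the essential barcode point
with birth index `i`. -/
noncomputable def multInf {V : Type*} [Fintype V] [DecidableEq V]
    (Kc : ℕ → Set (Finset V)) (k m i : ℕ) : ℤ :=
  pB Kc k i m - pB Kc k (i - 1) m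

/-- The rank of a vertex `v` under the filter `g`: the number of vertices `u` with
`g u ≤ g v`. -/
noncomputable def vrank {V : Type*} [Fintype V] (g : V → ℝ) (v : V) : ℕ :=
  (Finset.univ.filter fun u => g u ≤ g v).card

/-- The `i`-th complex of the sublevel set filtration of `K` induced by the vertex filter `g`
(described via vertex ranks): for injective `g` this is
`K^{g,i} = {σ ∈ K : max_{v ∈ σ} g v ≤ a_i}` for the sorted values `a_1 < ... < a_n` of `g`. -/
noncomputable def sublevelCplx {n : ℕ} (K : Set (Finset (Fin n))) (g : Fin n → ℝ) (i : ℕ) :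
    Set (Finset (Fin n)) :=
  {σ ∈ K | ∀ v ∈ σ, vrank g v ≤ i}

/-- The `i`-th smallest filter value `a_i` of `g` (indexed from `1`). -/
noncomputable def sortedVal {n : ℕ} (g : Fin n → ℝ) (i : ℕ) : ℝ :=
  ((Finset.univ.image g).sort (· ≤ ·)).getD (i - 1) 0

/-- The barcode coordinate function `V` applied to the `k`-dimensional persistence barcode of
the sublevel set filtration of `K` induced by `v ↦ f θ v`: the sum, over barcode points
`(a_i, a_j)` counted with multiplicity `μ_k^{i,j}(θ)`, of the structure element `s`. -/
noncomputable def Vph {n d : ℕ} (K : Set (Finset (Fin n))) (s : ℝ × ℝ → ℝ) (k : ℕ)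
    (f : (Fin d → ℝ) → Fin n → ℝ) (θ : Fin d → ℝ) : ℝ :=
  ∑ i ∈ Finset.Icc 1 n, ∑ j ∈ Finset.Icc (i + 1) n,
    ((mult (sublevelCplx K (f θ)) k i j : ℤ) : ℝ) * s (sortedVal (f θ) i, sortedVal (f θ) j)

lemma sortedValAux {n : ℕ} (g : Fin n → ℝ) (π : Equiv.Perm (Fin n))
    (hmono : StrictMono (fun i => g (π i))) (i : Fin n) :
    sortedVal g ((i : ℕ) + 1) = g (π i) := by
  have hL : ((Finset.univ.image g).sort (· ≤ ·)) = List.ofFn (fun i => g (π i)) := by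
    haveI : IsAntisymm ℝ (fun x1 x2 : ℝ => x1 ≤ x2) := ⟨fun _ _ => le_antisymm⟩
    have hperm : ((Finset.univ.image g).sort (· ≤ ·)).Perm (List.ofFn (fun i => g (π i))) := by
      apply List.perm_of_nodup_nodup_toFinset_eq (Finset.sort_nodup _ _)
        (List.nodup_ofFn.mpr hmono.injective)
      rw [Finset.sort_toFinset]
      ext a
      simp only [List.mem_toFinset, List.mem_ofFn, Finset.mem_image, Finset.mem_univ, true_and,
        Set.mem_range]
      constructor
      · rintro ⟨v, rfl⟩; exact ⟨π.symm v, by simp⟩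
      · rintro ⟨j, rfl⟩; exact ⟨π j, rfl⟩
    exact List.Perm.eq_of_pairwise' (Finset.pairwise_sort _ _)
      hmono.monotone.sortedLE_ofFn.pairwise hperm
  unfold sortedVal
  rw [hL]
  simp only [Nat.add_sub_cancel]
  rw [List.getD_eq_getElem _ _ (by simp)]
  simp

lemma shiftSum {n : ℕ} (m : ℕ) (hm : 1 ≤ m) (G : ℕ → ℝ) :
    ∑ a ∈ Finset.Icc m n, G a
      = ∑ a ∈ Finset.univ.filter (fun a : Fin n => m ≤ (a : ℕ) + 1), G ((a : ℕ) + 1) := by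
  refine Finset.sum_bij (fun a ha => ⟨a - 1, by simp only [Finset.mem_Icc] at ha; omega⟩)
    ?_ ?_ ?_ ?_
  · intro a ha
    simp only [Finset.mem_Icc] at ha
    refine Finset.mem_filter.mpr ⟨Finset.mem_univ _, ?_⟩
    show m ≤ a - 1 + 1
    omega
  · intro a ha b hb h
    simp only [Finset.mem_Icc] at ha hb
    have h' : a - 1 = b - 1 := congrArg Fin.val h
    omega
  · intro b hb
    simp only [Finset.mem_filter, Finset.mem_univ, true_and] at hb
    have hbn : (b : ℕ) < n := b.isLt
    refine ⟨(b : ℕ) + 1, Finset.mem_Icc.mpr ⟨by omega, by omega⟩, ?_⟩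
    apply Fin.ext
    show (b : ℕ) + 1 - 1 = (b : ℕ)
    omega
  · intro a ha
    simp only [Finset.mem_Icc] at ha
    show G a = G (a - 1 + 1)
    rw [Nat.sub_add_cancel (by omega : 1 ≤ a)]

/-- **Lemma 1 of the paper, multi-parameter form.** If `f : ℝⁿ × V → ℝ` is a
learnable vertex filter, differentiable in the parameter `θ` for each vertex of the finite
complex `K`, the vertex filter values at `θ₀` are pairwise distinct, and `s : ℝ² → ℝ` is
differentiable (vanishing on the diagonal), then `θ ↦ V(ph_k^f(θ, K))` is differentiable at
`θ₀`; moreover, near `θ₀` it equals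
`θ ↦ Σ_{i<j} μ_k^{i,j}(θ₀) · s (f θ (π i), f θ (π j))` for the sorting permutation `π` at `θ₀`
and the locally constant barcode multiplicities `μ_k^{i,j}(θ₀)`. -/
theorem graph_filtration_learning_lemma1
    (n d : ℕ) (K : Set (Finset (Fin n))) (hK : IsSimplicialComplex K) (k : ℕ)
    (f : (Fin d → ℝ) → Fin n → ℝ) (θ₀ : Fin d → ℝ)
    (hdiff : ∀ v : Fin n, DifferentiableAt ℝ (fun θ => f θ v) θ₀)
    (hdist : Function.Injective (f θ₀))
    (s : ℝ × ℝ → ℝ) (hs : Differentiable ℝ s) (hs0 : ∀ x : ℝ, s (x, x) = 0) :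
    DifferentiableAt ℝ (Vph K s k f) θ₀ ∧
    ∃ π : Equiv.Perm (Fin n), StrictMono (fun i => f θ₀ (π i)) ∧
      ∀ᶠ θ in nhds θ₀,
        Vph K s k f θ =
          ∑ i : Fin n, ∑ j ∈ Finset.univ.filter (fun j => i < j),
            ((mult (sublevelCplx K (f θ₀)) k ((i : ℕ) + 1) ((j : ℕ) + 1) : ℤ) : ℝ)
              * s (f θ (π i), f θ (π j)) := by
  classical
  set π : Equiv.Perm (Fin n) := Tuple.sort (f θ₀) with hπdef
  have hmono0 : StrictMono (fun i => f θ₀ (π i)) :=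
    (Tuple.monotone_sort (f θ₀)).strictMono_of_injective (hdist.comp π.injective)
  -- eventual preservation of strict inequalities
  have hQ : ∀ᶠ θ in nhds θ₀, ∀ u v : Fin n, f θ₀ u < f θ₀ v → f θ u < f θ v := by
    rw [Filter.eventually_all]
    intro u
    rw [Filter.eventually_all]
    intro v
    by_cases h : f θ₀ u < f θ₀ v
    · filter_upwards [ContinuousAt.eventually_lt (hdiff u).continuousAt
        (hdiff v).continuousAt h] with θ hθ _
      exact hθ
    · filter_upwards with θ hθ
      exact absurd hθ h
  -- key pointwise identity
  have key : ∀ θ, (∀ u v : Fin n, f θ₀ u < f θ₀ v → f θ u < f θ v) →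
      Vph K s k f θ =
        ∑ i : Fin n, ∑ j ∈ Finset.univ.filter (fun j => i < j),
          ((mult (sublevelCplx K (f θ₀)) k ((i : ℕ) + 1) ((j : ℕ) + 1) : ℤ) : ℝ)
            * s (f θ (π i), f θ (π j)) := by
    intro θ hQθ
    have hiff : ∀ u v : Fin n, f θ u < f θ v ↔ f θ₀ u < f θ₀ v := by
      intro u v
      constructor
      · intro h
        rcases lt_trichotomy (f θ₀ u) (f θ₀ v) with h' | h' | h'
        · exact h'
        · exact absurd (congrArg (f θ) (hdist h')) (ne_of_lt h)
        · exact absurd (hQθ v u h') (lt_asymm h)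
      · exact hQθ u v
    have hle : ∀ u v : Fin n, f θ u ≤ f θ v ↔ f θ₀ u ≤ f θ₀ v := by
      intro u v
      rw [← not_lt, ← not_lt, hiff]
    have hvr : vrank (f θ) = vrank (f θ₀) := by
      funext v
      unfold vrank
      congr 1
      apply Finset.filter_congr
      intro u _
      simp [hle]
    have hsub : sublevelCplx K (f θ) = sublevelCplx K (f θ₀) := by
      unfold sublevelCplx
      rw [hvr]
    have hmonoθ : StrictMono (fun i => f θ (π i)) := by
      intro i j hij
      exact hQθ _ _ (hmono0 hij)
    unfold Vph
    rw [hsub]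
    rw [shiftSum 1 le_rfl]
    rw [show (Finset.univ.filter (fun a : Fin n => 1 ≤ (a : ℕ) + 1)) = Finset.univ by
      simp]
    apply Finset.sum_congr rfl
    intro i _
    rw [shiftSum ((i : ℕ) + 1 + 1) (by omega)]
    rw [show (Finset.univ.filter (fun j : Fin n => (i : ℕ) + 1 + 1 ≤ (j : ℕ) + 1)) =
        (Finset.univ.filter (fun j : Fin n => i < j)) by
      apply Finset.filter_congr
      intro j _
      simp only [Fin.lt_def]
      omega]
    apply Finset.sum_congr rfl
    intro j _
    rw [sortedValAux (f θ) π hmonoθ i, sortedValAux (f θ) π hmonoθ j]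
  have hev : Vph K s k f =ᶠ[nhds θ₀]
      (fun θ => ∑ i : Fin n, ∑ j ∈ Finset.univ.filter (fun j => i < j),
        ((mult (sublevelCplx K (f θ₀)) k ((i : ℕ) + 1) ((j : ℕ) + 1) : ℤ) : ℝ)
          * s (f θ (π i), f θ (π j))) := by
    filter_upwards [hQ] with θ hθ using key θ hθ
  have hdiffRHS : DifferentiableAt ℝ
      (fun θ => ∑ i : Fin n, ∑ j ∈ Finset.univ.filter (fun j => i < j),
        ((mult (sublevelCplx K (f θ₀)) k ((i : ℕ) + 1) ((j : ℕ) + 1) : ℤ) : ℝ)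
          * s (f θ (π i), f θ (π j))) θ₀ := by
    apply DifferentiableAt.fun_sum
    intro i _
    apply DifferentiableAt.fun_sum
    intro j _
    apply DifferentiableAt.const_mul
    exact (hs (f θ₀ (π i), f θ₀ (π j))).comp θ₀ ((hdiff (π i)).prodMk (hdiff (π j)))
  refine ⟨hev.differentiableAt_iff.mpr hdiffRHS, π, hmono0, hev⟩
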